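/- Let ℓ ∈ ℝⁿ and α ∈ (0,1] with k = αn a positive integer. Then the average of the k largest entries of ℓ equals inf over η ∈ ℝ of (η + (1/(αn)) ∑ᵢ max(ℓᵢ − η, 0)), and the infimum is attained at η equal to the k-th largest entry of ℓ. -/

import Mathlib

/-- Rockafellar–Uryasev duality for empirical CVaR: the average of the `k = αn` largest
losses equals `inf_η (η + (1/(αn)) Σᵢ (ℓᵢ − η)₊)`, attained at the k-th largest entry. -/
theorem stmt_7 (n k : ℕ) (hn : 0 < n) (hk : 0 < k) (hkn : k ≤ n) (α : ℝ)
    (hα : 0 < α ∧ α ≤ 1) (hαk : (k : ℝ) = α * n) (ℓ : Fin n → ℝ)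
    (σ : Equiv.Perm (Fin n))
    (hσ : ∀ i j : Fin n, i ≤ j → ℓ (σ j) ≤ ℓ (σ i)) :
    ((1 : ℝ) / k) * (∑ i ∈ Finset.univ.filter (fun i : Fin n => (i : ℕ) < k), ℓ (σ i))
        = sInf {x : ℝ | ∃ η : ℝ, x = η + (1 / (α * n)) * ∑ i, max (ℓ i - η) 0} ∧
    ((1 : ℝ) / k) * (∑ i ∈ Finset.univ.filter (fun i : Fin n => (i : ℕ) < k), ℓ (σ i))
        = ℓ (σ ⟨k - 1, by omega⟩)
          + (1 / (α * n)) * ∑ i, max (ℓ i - ℓ (σ ⟨k - 1, by omega⟩)) 0 := by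
  obtain ⟨hα0, hα1⟩ := hα
  rw [← hαk]
  have hkR : (0:ℝ) < (k:ℝ) := by exact_mod_cast hk
  set A : Finset (Fin n) := Finset.univ.filter (fun i : Fin n => (i : ℕ) < k) with hA
  have hcard : A.card = k := by
    rw [hA, Finset.card_filter]
    rw [Fin.sum_univ_eq_sum_range (fun i => if i < k then 1 else 0)]
    rw [← Finset.card_filter]
    have : (Finset.range n).filter (· < k) = Finset.range k := by
      ext x; simp; omega
    rw [this, Finset.card_range]
  set ι : Fin n := ⟨k - 1, by omega⟩ with hι
  set η₀ : ℝ := ℓ (σ ι) with hη₀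
  -- general lower bound for the sum
  have key : ∀ η : ℝ, (∑ i ∈ A, (ℓ (σ i) - η)) ≤ ∑ i, max (ℓ i - η) 0 := by
    intro η
    rw [← Equiv.sum_comp σ (fun x => max (ℓ x - η) 0)]
    calc (∑ i ∈ A, (ℓ (σ i) - η)) ≤ ∑ i ∈ A, max (ℓ (σ i) - η) 0 :=
          Finset.sum_le_sum (fun i _ => le_max_left _ _)
      _ ≤ ∑ i, max (ℓ (σ i) - η) 0 :=
          Finset.sum_le_sum_of_subset_of_nonneg (Finset.subset_univ A)
            (fun i _ _ => le_max_right _ _)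
  -- exact value at η₀
  have hexact : (∑ i, max (ℓ i - η₀) 0) = ∑ i ∈ A, (ℓ (σ i) - η₀) := by
    rw [← Equiv.sum_comp σ (fun x => max (ℓ x - η₀) 0)]
    rw [← Finset.sum_filter_add_sum_filter_not Finset.univ (fun i : Fin n => (i : ℕ) < k)]
    have h1 : ∀ i ∈ A, max (ℓ (σ i) - η₀) 0 = ℓ (σ i) - η₀ := by
      intro i hi
      rw [hA, Finset.mem_filter] at hi
      have hik : (i : ℕ) < k := hi.2
      have hle : i ≤ ι := by
        rw [Fin.le_def]; show (i : ℕ) ≤ k - 1; omega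
      have := hσ i ι hle
      exact max_eq_left (by linarith)
    have h2 : ∀ i ∈ Finset.univ.filter (fun i : Fin n => ¬ (i : ℕ) < k),
        max (ℓ (σ i) - η₀) 0 = 0 := by
      intro i hi
      rw [Finset.mem_filter] at hi
      have hik : ¬ (i : ℕ) < k := hi.2
      have hle : ι ≤ i := by
        rw [Fin.le_def]; show k - 1 ≤ (i : ℕ); omega
      have := hσ ι i hle
      exact max_eq_right (by linarith)
    rw [Finset.sum_congr rfl h1, Finset.sum_eq_zero h2, add_zero]
  have hsub : ∀ η : ℝ, (∑ i ∈ A, (ℓ (σ i) - η)) = (∑ i ∈ A, ℓ (σ i)) - k * η := by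
    intro η
    rw [Finset.sum_sub_distrib, Finset.sum_const, hcard, nsmul_eq_mul]
  -- the attained value equality
  have hval : ((1 : ℝ) / k) * (∑ i ∈ A, ℓ (σ i))
      = η₀ + (1 / (k:ℝ)) * ∑ i, max (ℓ i - η₀) 0 := by
    rw [hexact, hsub]
    field_simp
    ring
  have hlb : ∀ η : ℝ, ((1:ℝ)/k) * (∑ i ∈ A, ℓ (σ i))
      ≤ η + (1/(k:ℝ)) * ∑ i, max (ℓ i - η) 0 := by
    intro η
    have h1 : (∑ i ∈ A, ℓ (σ i)) - k * η ≤ ∑ i, max (ℓ i - η) 0 := (hsub η) ▸ key η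
    have h4 : η + ((1:ℝ)/k) * ((∑ i ∈ A, ℓ (σ i)) - k * η)
        = ((1:ℝ)/k) * (∑ i ∈ A, ℓ (σ i)) := by
      field_simp; ring
    calc ((1:ℝ)/k) * (∑ i ∈ A, ℓ (σ i))
        = η + ((1:ℝ)/k) * ((∑ i ∈ A, ℓ (σ i)) - k * η) := h4.symm
      _ ≤ η + ((1:ℝ)/k) * ∑ i, max (ℓ i - η) 0 :=
          (add_le_add_iff_left η).mpr (mul_le_mul_of_nonneg_left h1 (by positivity))
  refine ⟨le_antisymm ?_ ?_, hval⟩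
  · exact le_csInf ⟨_, ⟨η₀, hval⟩⟩ (by rintro x ⟨η, rfl⟩; exact hlb η)
  · exact csInf_le ⟨_, by rintro x ⟨η, rfl⟩; exact hlb η⟩ ⟨η₀, hval⟩
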